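/- There exist constants C₂ > 0 and R₀ > 0 such that for every R ≥ R₀ and every time t ∈ (0, t₁(R)) at which −π ≤ θ_R(t) ≤ 0 and r_R(t) ≥ √(2(n−1)/m), one has x_R(t) ≤ C₂/R. -/

import Mathlib

/-- The arc-length system (1.5): `x' = cos θ`, `r' = sin θ`,
`θ' = ((n-1)/r - (r/2) f'(x²+r²)) cos θ + (x/2) f'(x²+r²) sin θ` on the set `s`. -/
def SolvesSystem (n : ℕ) (f : ℝ → ℝ) (x r θ : ℝ → ℝ) (s : Set ℝ) : Prop :=
  ∀ t ∈ s,
    HasDerivAt x (Real.cos (θ t)) t ∧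
    HasDerivAt r (Real.sin (θ t)) t ∧
    HasDerivAt θ
      ((((n : ℝ) - 1) / r t - r t / 2 * deriv f (x t ^ 2 + r t ^ 2)) * Real.cos (θ t)
        + x t / 2 * deriv f (x t ^ 2 + r t ^ 2) * Real.sin (θ t)) t

/-- None of the exit events `θ = 0`, `θ = -π`, `x = 0`, `r = 0` occurs on `s`. -/
def NoExit (x r θ : ℝ → ℝ) (s : Set ℝ) : Prop :=
  ∀ t ∈ s, θ t ≠ 0 ∧ θ t ≠ -Real.pi ∧ x t ≠ 0 ∧ r t ≠ 0

private lemma myAnti {F F' : ℝ → ℝ} {a b : ℝ}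
    (hF : ∀ s ∈ Set.Icc a b, HasDerivAt F (F' s) s)
    (h : ∀ s ∈ Set.Ioo a b, F' s ≤ 0) : AntitoneOn F (Set.Icc a b) := by
  apply antitoneOn_of_deriv_nonpos (convex_Icc a b)
  · exact fun s hs => (hF s hs).continuousAt.continuousWithinAt
  · rw [interior_Icc]
    exact fun s hs => ((hF s (Set.Ioo_subset_Icc_self hs)).differentiableAt).differentiableWithinAt
  · rw [interior_Icc]
    intro s hs
    rw [(hF s (Set.Ioo_subset_Icc_self hs)).deriv]
    exact h s hs

private lemma myMono {F F' : ℝ → ℝ} {a b : ℝ}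
    (hF : ∀ s ∈ Set.Icc a b, HasDerivAt F (F' s) s)
    (h : ∀ s ∈ Set.Ioo a b, 0 ≤ F' s) : MonotoneOn F (Set.Icc a b) := by
  apply monotoneOn_of_deriv_nonneg (convex_Icc a b)
  · exact fun s hs => (hF s hs).continuousAt.continuousWithinAt
  · rw [interior_Icc]
    exact fun s hs => ((hF s (Set.Ioo_subset_Icc_self hs)).differentiableAt).differentiableWithinAt
  · rw [interior_Icc]
    intro s hs
    rw [(hF s (Set.Ioo_subset_Icc_self hs)).deriv]
    exact h s hs

/-- For sufficiently large `R`, at every time before the first exit time at which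
`-π ≤ θ_R ≤ 0` and `r_R ≥ √(2(n-1)/m)`, one has `x_R ≤ C₂/R`. -/
theorem x_small_while_r_large
    (n : ℕ) (hn : 2 ≤ n) (m M : ℝ) (hm : 0 < m) (hmM : m ≤ M)
    (f : ℝ → ℝ) (hf : ContDiff ℝ 2 f)
    (hconv : ∀ s : ℝ, 0 ≤ deriv (deriv f) s)
    (hlow : ∀ s : ℝ, m ≤ deriv f s) (hup : ∀ s : ℝ, deriv f s ≤ M) :
    ∃ C₂ R₀ : ℝ, 0 < C₂ ∧ 0 < R₀ ∧
      ∀ R : ℝ, R₀ ≤ R →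
        ∀ x r θ : ℝ → ℝ, ∀ T : ℝ, 0 < T →
          x 0 = 0 → r 0 = R → θ 0 = 0 →
          SolvesSystem n f x r θ (Set.Icc 0 T) →
          NoExit x r θ (Set.Ioo 0 T) →
          ∀ t ∈ Set.Ioo 0 T,
            -Real.pi ≤ θ t → θ t ≤ 0 → Real.sqrt (2 * ((n : ℝ) - 1) / m) ≤ r t →
            x t ≤ C₂ / R := by
  have hπ := Real.pi_pos
  refine ⟨72 * Real.pi / m, Real.sqrt ((64 * Real.pi + 16 * n) / m), by positivity,
    Real.sqrt_pos.mpr (by positivity), ?_⟩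
  intro R hR x r θ T hT hx0 hr0 hθ0 hsol hexit t ht hθlb hθub hrt
  obtain ⟨ht0, htT⟩ := ht
  have hn2 : (2:ℝ) ≤ (n:ℝ) := by exact_mod_cast hn
  have hR0 : (0:ℝ) < R := lt_of_lt_of_le (Real.sqrt_pos.mpr (by positivity)) hR
  have hmR2 : 64 * Real.pi + 16 * (n:ℝ) ≤ m * R ^ 2 := by
    have h1 : Real.sqrt ((64 * Real.pi + 16 * n) / m) ^ 2 ≤ R ^ 2 :=
      pow_le_pow_left₀ (Real.sqrt_nonneg _) hR 2
    rw [Real.sq_sqrt (by positivity)] at h1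
    rw [div_le_iff₀ hm] at h1
    linarith only [h1]
  have hA8 : 16 * ((n:ℝ) - 1) ≤ m * R ^ 2 := by linarith only [hmR2, hπ, hn2]
  obtain ⟨e, he_def⟩ : ∃ e : ℝ, e = 32 * Real.pi / (m * R ^ 2) := ⟨_, rfl⟩
  have he_pos : 0 < e := by rw [he_def]; positivity
  have he_half : e ≤ 1 / 2 := by
    rw [he_def, div_le_iff₀ (by positivity)]
    linarith only [hmR2, hn2, hπ]
  -- basic inclusions and derivative/continuity facts
  have hsub : Set.Icc (0:ℝ) t ⊆ Set.Icc 0 T := Set.Icc_subset_Icc le_rfl htT.le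
  have hsub2 : Set.Ioc (0:ℝ) t ⊆ Set.Ioo 0 T := fun s hs => ⟨hs.1, lt_of_le_of_lt hs.2 htT⟩
  have hx' : ∀ s ∈ Set.Icc (0:ℝ) t, HasDerivAt x (Real.cos (θ s)) s :=
    fun s hs => (hsol s (hsub hs)).1
  have hr' : ∀ s ∈ Set.Icc (0:ℝ) t, HasDerivAt r (Real.sin (θ s)) s :=
    fun s hs => (hsol s (hsub hs)).2.1
  obtain ⟨Θ', hΘdef⟩ : ∃ g : ℝ → ℝ, g = fun s =>
      (((n : ℝ) - 1) / r s - r s / 2 * deriv f (x s ^ 2 + r s ^ 2)) * Real.cos (θ s)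
        + x s / 2 * deriv f (x s ^ 2 + r s ^ 2) * Real.sin (θ s) := ⟨_, rfl⟩
  have hθ' : ∀ s ∈ Set.Icc (0:ℝ) t, HasDerivAt θ (Θ' s) s := by
    intro s hs
    rw [hΘdef]
    exact (hsol s (hsub hs)).2.2
  have hxc : ContinuousOn x (Set.Icc 0 t) :=
    fun s hs => (hx' s hs).continuousAt.continuousWithinAt
  have hrc : ContinuousOn r (Set.Icc 0 t) :=
    fun s hs => (hr' s hs).continuousAt.continuousWithinAt
  have hθc : ContinuousOn θ (Set.Icc 0 t) :=
    fun s hs => (hθ' s hs).continuousAt.continuousWithinAt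
  -- θ < 0 on (0, t]
  have hθt_neg : θ t < 0 := lt_of_le_of_ne hθub (hexit t ⟨ht0, htT⟩).1
  have hθneg : ∀ s ∈ Set.Ioc (0:ℝ) t, θ s < 0 := by
    intro s hs
    by_contra hc
    push_neg at hc
    have hne := (hexit s (hsub2 hs)).1
    have hpos : 0 < θ s := lt_of_le_of_ne hc (Ne.symm hne)
    obtain ⟨c, hc1, hc2⟩ := intermediate_value_Ioo' hs.2
      (hθc.mono (Set.Icc_subset_Icc hs.1.le le_rfl))
      (Set.mem_Ioo.mpr ⟨hθt_neg, hpos⟩)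
    exact (hexit c (hsub2 ⟨lt_trans hs.1 hc1.1, hc1.2.le⟩)).1 hc2
  have hθgt : ∀ s ∈ Set.Ioc (0:ℝ) t, -Real.pi < θ s := by
    intro s hs
    by_contra hc
    push_neg at hc
    have hne := (hexit s (hsub2 hs)).2.1
    have hlt : θ s < -Real.pi := lt_of_le_of_ne hc hne
    obtain ⟨c, hc1, hc2⟩ := intermediate_value_Ioo' hs.1.le
      (hθc.mono (Set.Icc_subset_Icc le_rfl hs.2))
      (Set.mem_Ioo.mpr ⟨hlt, by rw [hθ0]; linarith⟩ :
        -Real.pi ∈ Set.Ioo (θ s) (θ 0))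
    exact (hexit c (hsub2 ⟨hc1.1, le_trans hc1.2.le hs.2⟩)).2.1 hc2
  have hsin_nonpos : ∀ s ∈ Set.Icc (0:ℝ) t, Real.sin (θ s) ≤ 0 := by
    intro s hs
    rcases eq_or_lt_of_le hs.1 with h | h
    · rw [← h, hθ0, Real.sin_zero]
    · exact (Real.sin_neg_of_neg_of_neg_pi_lt (hθneg s ⟨h, hs.2⟩) (hθgt s ⟨h, hs.2⟩)).le
  -- x > 0 on (0, t]
  have hxpos : ∀ s ∈ Set.Ioc (0:ℝ) t, 0 < x s := by
    intro s hs
    by_contra hc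
    push_neg at hc
    have hne := (hexit s (hsub2 hs)).2.2.1
    have hneg : x s < 0 := lt_of_le_of_ne hc hne
    have hcont0 : ContinuousAt (fun u => Real.cos (θ u)) 0 :=
      Real.continuous_cos.continuousAt.comp (hθ' 0 ⟨le_rfl, ht0.le⟩).continuousAt
    have h01 : (0:ℝ) < Real.cos (θ 0) := by rw [hθ0, Real.cos_zero]; norm_num
    have h1 : ∀ᶠ u in nhds (0:ℝ), 0 < Real.cos (θ u) :=
      hcont0.eventually (eventually_gt_nhds h01)
    obtain ⟨δ, hδpos, hδ⟩ := Metric.eventually_nhds_iff.mp h1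
    set u := min (δ / 2) (s / 2) with hu
    have hu0 : 0 < u := lt_min (by linarith) (by linarith [hs.1])
    have huδ : u < δ := lt_of_le_of_lt (min_le_left _ _) (by linarith)
    have hus : u < s := lt_of_le_of_lt (min_le_right _ _) (by linarith [hs.1])
    have hut : u ≤ t := le_trans hus.le hs.2
    have hmono : StrictMonoOn x (Set.Icc 0 u) := by
      apply strictMonoOn_of_deriv_pos (convex_Icc 0 u)
        (hxc.mono (Set.Icc_subset_Icc le_rfl hut))
      rw [interior_Icc]
      intro v hv
      rw [(hx' v ⟨hv.1.le, le_trans hv.2.le hut⟩).deriv]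
      apply hδ
      rw [Real.dist_eq, sub_zero, abs_of_pos hv.1]
      exact lt_trans hv.2 huδ
    have hxu : 0 < x u := by
      have := hmono (Set.left_mem_Icc.mpr hu0.le) (Set.right_mem_Icc.mpr hu0.le) hu0
      rwa [hx0] at this
    obtain ⟨c, hc1, hc2⟩ := intermediate_value_Ioo' hus.le
      (hxc.mono (Set.Icc_subset_Icc hu0.le hs.2))
      (Set.mem_Ioo.mpr ⟨hneg, hxu⟩)
    exact (hexit c (hsub2 ⟨lt_trans hu0 hc1.1, le_trans hc1.2.le hs.2⟩)).2.2.1 hc2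
  -- r is antitone
  have hrmono : AntitoneOn r (Set.Icc 0 t) :=
    myAnti hr' (fun s hs => hsin_nonpos s (Set.Ioo_subset_Icc_self hs))
  have hrt_pos : 0 < r t := by
    refine lt_of_lt_of_le (Real.sqrt_pos.mpr ?_) hrt
    apply div_pos (by linarith) hm
  have hrlo : ∀ s ∈ Set.Icc (0:ℝ) t, r t ≤ r s :=
    fun s hs => hrmono hs (Set.right_mem_Icc.mpr ht0.le) hs.2
  have hrpos : ∀ s ∈ Set.Icc (0:ℝ) t, 0 < r s :=
    fun s hs => lt_of_lt_of_le hrt_pos (hrlo s hs)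
  have hrub : ∀ s ∈ Set.Icc (0:ℝ) t, r s ≤ R := by
    intro s hs
    have := hrmono (Set.left_mem_Icc.mpr ht0.le) hs hs.1
    rwa [hr0] at this
  have hρ : ∀ s ∈ Set.Icc (0:ℝ) t, 2 * ((n:ℝ) - 1) ≤ m * r s ^ 2 := by
    intro s hs
    have h1 : Real.sqrt (2 * ((n:ℝ) - 1) / m) ^ 2 ≤ r s ^ 2 :=
      pow_le_pow_left₀ (Real.sqrt_nonneg _) (le_trans hrt (hrlo s hs)) 2
    rw [Real.sq_sqrt (div_nonneg (by linarith only [hn2]) hm.le)] at h1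
    rw [div_le_iff₀ hm] at h1
    linarith only [h1]
  -- key pointwise bound on θ'
  have hkey : ∀ s ∈ Set.Ioc (0:ℝ) t, 0 ≤ Real.cos (θ s) →
      Θ' s ≤ (((n:ℝ) - 1) / r s - r s * m / 2) * Real.cos (θ s) := by
    intro s hs hcos
    have hg := hlow (x s ^ 2 + r s ^ 2)
    have hxnn := (hxpos s hs).le
    have hsin := hsin_nonpos s ⟨hs.1.le, hs.2⟩
    have hr := hrpos s ⟨hs.1.le, hs.2⟩
    have h2 : x s / 2 * deriv f (x s ^ 2 + r s ^ 2) * Real.sin (θ s) ≤ 0 :=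
      mul_nonpos_of_nonneg_of_nonpos (mul_nonneg (by linarith) (by linarith)) hsin
    have h1 : ((n:ℝ) - 1) / r s - r s / 2 * deriv f (x s ^ 2 + r s ^ 2)
        ≤ ((n:ℝ) - 1) / r s - r s * m / 2 := by
      have h0 := mul_le_mul_of_nonneg_left hg (by linarith : (0:ℝ) ≤ r s / 2)
      linarith only [h0]
    have h3 := mul_le_mul_of_nonneg_right h1 hcos
    simp only [hΘdef]
    linarith only [h2, h3]
  have hA1_nonpos : ∀ s ∈ Set.Icc (0:ℝ) t, ((n:ℝ) - 1) / r s - r s * m / 2 ≤ 0 := by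
    intro s hs
    have hr := hrpos s hs
    have := hρ s hs
    rw [sub_nonpos, div_le_iff₀ hr]
    linarith only [this]
  have hA1_strong : ∀ s ∈ Set.Icc (0:ℝ) t, R / 2 ≤ r s →
      ((n:ℝ) - 1) / r s - r s * m / 2 ≤ -(m * R / 8) := by
    intro s hs hhalf
    have hr := hrpos s hs
    have h1 : ((n:ℝ) - 1) / r s ≤ m * R / 8 := by
      rw [div_le_iff₀ hr]
      have h2 := mul_le_mul_of_nonneg_left hhalf (by positivity : (0:ℝ) ≤ m * R / 8)
      linarith only [hA8, h2]
    have h3 := mul_le_mul_of_nonneg_left hhalf (by positivity : (0:ℝ) ≤ m / 2)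
    linarith only [h1, h3]
  -- Phase 1
  have hphase1 : ∀ σ' ∈ Set.Ioc (0:ℝ) t,
      (∀ s ∈ Set.Ico (0:ℝ) σ', e < Real.cos (θ s)) → x σ' ≤ 8 * Real.pi / (m * R) := by
    intro σ' hσ' hcos
    have hsubσ : Set.Icc (0:ℝ) σ' ⊆ Set.Icc 0 t := Set.Icc_subset_Icc le_rfl hσ'.2
    -- r stays above R/2 on [0, σ']
    have hhalf : ∀ s ∈ Set.Icc (0:ℝ) σ', R / 2 < r s := by
      by_contra hcon
      push_neg at hcon
      obtain ⟨s₀, hs₀, hrs₀⟩ := hcon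
      set S₂ := Set.Icc (0:ℝ) σ' ∩ r ⁻¹' Set.Iic (R / 2) with hS₂def
      have hS₂ne : S₂.Nonempty := ⟨s₀, hs₀, hrs₀⟩
      have hS₂closed : IsClosed S₂ :=
        (hrc.mono hsubσ).preimage_isClosed_of_isClosed isClosed_Icc isClosed_Iic
      have hbdd : BddBelow S₂ := ⟨0, fun a ha => ha.1.1⟩
      set σ₂ := sInf S₂ with hσ₂def
      have hσ₂mem : σ₂ ∈ S₂ := hS₂closed.csInf_mem hS₂ne hbdd
      obtain ⟨hσ₂Icc, hrσ₂⟩ := hσ₂mem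
      have hrσ₂' : r σ₂ ≤ R / 2 := hrσ₂
      have hσ₂pos : 0 < σ₂ := by
        rcases eq_or_lt_of_le hσ₂Icc.1 with h | h
        · exfalso; rw [← h, hr0] at hrσ₂'; linarith
        · exact h
      have hpre : ∀ s ∈ Set.Ico (0:ℝ) σ₂, R / 2 < r s := by
        intro s hs
        by_contra hc
        push_neg at hc
        exact absurd (csInf_le hbdd (⟨⟨hs.1, le_trans hs.2.le hσ₂Icc.2⟩, hc⟩ : s ∈ S₂))
          (not_le.mpr hs.2)
      have hdecay : AntitoneOn (fun s => θ s + 4 * Real.pi / R * s) (Set.Icc 0 σ₂) := by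
        apply myAnti (F' := fun s => Θ' s + 4 * Real.pi / R)
        · intro s hs
          have hs' : s ∈ Set.Icc (0:ℝ) t := ⟨hs.1, le_trans hs.2 (le_trans hσ₂Icc.2 hσ'.2)⟩
          simpa [Pi.add_def] using (hθ' s hs').add (HasDerivAt.const_mul (4 * Real.pi / R) (hasDerivAt_id s))
        · intro s hs
          have hsIoc : s ∈ Set.Ioc (0:ℝ) t :=
            ⟨hs.1, le_trans hs.2.le (le_trans hσ₂Icc.2 hσ'.2)⟩
          have hc := hcos s ⟨hs.1.le, lt_of_lt_of_le hs.2 hσ₂Icc.2⟩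
          have hcnn : 0 ≤ Real.cos (θ s) := (he_pos.trans hc).le
          have h1 := hkey s hsIoc hcnn
          have h2 := hA1_strong s ⟨hsIoc.1.le, hsIoc.2⟩ (hpre s ⟨hs.1.le, hs.2⟩).le
          have h3 : (((n:ℝ) - 1) / r s - r s * m / 2) * Real.cos (θ s) ≤ -(m * R / 8) * e := by
            calc (((n:ℝ) - 1) / r s - r s * m / 2) * Real.cos (θ s)
                ≤ -(m * R / 8) * Real.cos (θ s) := mul_le_mul_of_nonneg_right h2 hcnn
              _ ≤ -(m * R / 8) * e := mul_le_mul_of_nonpos_left hc.le (neg_nonpos.mpr (by positivity))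
          have h4 : -(m * R / 8) * e = -(4 * Real.pi / R) := by
            rw [he_def]
            field_simp
            ring
          rw [h4] at h3
          linarith only [h1, h3]
      have hθσ₂ : θ σ₂ + 4 * Real.pi / R * σ₂ ≤ 0 := by
        have h15 : θ σ₂ + 4 * Real.pi / R * σ₂ ≤ θ 0 + 4 * Real.pi / R * 0 :=
          hdecay (Set.left_mem_Icc.mpr hσ₂pos.le) (Set.right_mem_Icc.mpr hσ₂pos.le)
            hσ₂pos.le
        rw [hθ0] at h15
        linarith only [h15]
      have hθσ₂lb : -Real.pi < θ σ₂ :=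
        hθgt σ₂ ⟨hσ₂pos, le_trans hσ₂Icc.2 hσ'.2⟩
      have hσ₂le : σ₂ ≤ R / 4 := by
        have h5 : 4 * Real.pi / R * σ₂ ≤ Real.pi := by linarith only [hθσ₂, hθσ₂lb]
        rw [div_mul_eq_mul_div, div_le_iff₀ hR0] at h5
        have h6 : 4 * σ₂ ≤ R := by
          have h7 := (mul_le_mul_iff_of_pos_left hπ).mp
            (show Real.pi * (4 * σ₂) ≤ Real.pi * R by linarith only [h5])
          linarith only [h7]
        linarith only [h6]
      have hrlow : MonotoneOn (fun s => r s + s) (Set.Icc 0 σ₂) := by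
        apply myMono (F' := fun s => Real.sin (θ s) + 1)
        · intro s hs
          have hs' : s ∈ Set.Icc (0:ℝ) t := ⟨hs.1, le_trans hs.2 (le_trans hσ₂Icc.2 hσ'.2)⟩
          simpa [Pi.add_def] using (hr' s hs').add (hasDerivAt_id s)
        · intro s _
          linarith [Real.neg_one_le_sin (θ s)]
      have h14 : r 0 + 0 ≤ r σ₂ + σ₂ :=
        hrlow (Set.left_mem_Icc.mpr hσ₂pos.le) (Set.right_mem_Icc.mpr hσ₂pos.le) hσ₂pos.le
      rw [hr0] at h14
      linarith only [h14, hσ₂le, hrσ₂', hR0]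
    -- now bound x σ'
    have hφ : AntitoneOn (fun s => x s + 8 / (m * R) * θ s) (Set.Icc 0 σ') := by
      apply myAnti (F' := fun s => Real.cos (θ s) + 8 / (m * R) * Θ' s)
      · intro s hs
        exact (hx' s (hsubσ hs)).add (HasDerivAt.const_mul (8 / (m * R)) (hθ' s (hsubσ hs)))
      · intro s hs
        have hsIoc : s ∈ Set.Ioc (0:ℝ) t := ⟨hs.1, le_trans hs.2.le hσ'.2⟩
        have hc := hcos s ⟨hs.1.le, hs.2⟩
        have hcnn : 0 ≤ Real.cos (θ s) := (he_pos.trans hc).le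
        have h1 := hkey s hsIoc hcnn
        have h2 := hA1_strong s ⟨hsIoc.1.le, hsIoc.2⟩ (hhalf s ⟨hs.1.le, hs.2.le⟩).le
        have h3 : Θ' s ≤ -(m * R / 8) * Real.cos (θ s) :=
          le_trans h1 (mul_le_mul_of_nonneg_right h2 hcnn)
        have h5 : 8 / (m * R) * Θ' s ≤ 8 / (m * R) * (-(m * R / 8) * Real.cos (θ s)) :=
          mul_le_mul_of_nonneg_left h3 (by positivity)
        have h6 : 8 / (m * R) * (-(m * R / 8) * Real.cos (θ s)) = -Real.cos (θ s) := by
          field_simp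
        rw [h6] at h5
        linarith only [h5]
    have hres : x σ' + 8 / (m * R) * θ σ' ≤ x 0 + 8 / (m * R) * θ 0 :=
      hφ (Set.left_mem_Icc.mpr hσ'.1.le) (Set.right_mem_Icc.mpr hσ'.1.le) hσ'.1.le
    rw [hx0, hθ0] at hres
    simp only [mul_zero, add_zero, zero_add] at hres
    have hθσ' := hθgt σ' hσ'
    have h7 : 8 / (m * R) * (-θ σ') ≤ 8 / (m * R) * Real.pi :=
      mul_le_mul_of_nonneg_left (by linarith) (by positivity)
    have h8 : 8 / (m * R) * Real.pi = 8 * Real.pi / (m * R) := by ring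
    linarith only [hres, h7, h8]
  -- Main case split
  set Sσ := Set.Icc (0:ℝ) t ∩ (fun s => Real.cos (θ s)) ⁻¹' Set.Iic e with hSσdef
  have hconcos : ContinuousOn (fun s => Real.cos (θ s)) (Set.Icc 0 t) :=
    Real.continuous_cos.comp_continuousOn hθc
  by_cases hS : Sσ.Nonempty
  · -- phase 2 occurs
    have hclosed : IsClosed Sσ :=
      hconcos.preimage_isClosed_of_isClosed isClosed_Icc isClosed_Iic
    have hbdd : BddBelow Sσ := ⟨0, fun a ha => ha.1.1⟩
    set σ := sInf Sσ with hσdef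
    have hσmem : σ ∈ Sσ := hclosed.csInf_mem hS hbdd
    have hσIcc : σ ∈ Set.Icc (0:ℝ) t := hσmem.1
    have hσcos : Real.cos (θ σ) ≤ e := hσmem.2
    have hσpos : 0 < σ := by
      rcases eq_or_lt_of_le hσIcc.1 with h | h
      · exfalso
        rw [← h, hθ0, Real.cos_zero] at hσcos
        linarith
      · exact h
    have hpre : ∀ s ∈ Set.Ico (0:ℝ) σ, e < Real.cos (θ s) := by
      intro s hs
      by_contra h
      push_neg at h
      exact absurd (csInf_le hbdd (⟨⟨hs.1, le_trans hs.2.le hσIcc.2⟩, h⟩ : s ∈ Sσ))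
        (not_le.mpr hs.2)
    have hxσ := hphase1 σ ⟨hσpos, hσIcc.2⟩ hpre
    -- cos θ stays ≤ e on [σ, t]
    have hcosle : ∀ s ∈ Set.Icc σ t, Real.cos (θ s) ≤ e := by
      intro s₂ hs₂
      by_contra hgt
      push_neg at hgt
      set U := Set.Icc σ s₂ ∩ (fun s => Real.cos (θ s)) ⁻¹' Set.Iic e with hUdef
      have hUne : U.Nonempty := ⟨σ, ⟨le_rfl, hs₂.1⟩, hσcos⟩
      have hUclosed : IsClosed U :=
        (hconcos.mono (Set.Icc_subset_Icc hσIcc.1 hs₂.2)).preimage_isClosed_of_isClosed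
          isClosed_Icc isClosed_Iic
      have hUbdd : BddAbove U := ⟨s₂, fun a ha => ha.1.2⟩
      set s₁ := sSup U with hs₁def
      have hs₁mem : s₁ ∈ U := hUclosed.csSup_mem hUne hUbdd
      have hs₁le : s₁ ≤ s₂ := hs₁mem.1.2
      have hs₁cos : Real.cos (θ s₁) ≤ e := hs₁mem.2
      have hs₁lt : s₁ < s₂ := by
        rcases eq_or_lt_of_le hs₁le with h | h
        · exfalso; rw [h] at hs₁cos; linarith
        · exact h
      have hmid : ∀ u ∈ Set.Ioc s₁ s₂, e < Real.cos (θ u) := by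
        intro u hu
        by_contra h
        push_neg at h
        exact absurd (le_csSup hUbdd (⟨⟨le_trans hs₁mem.1.1 hu.1.le, hu.2⟩, h⟩ : u ∈ U))
          (not_le.mpr hu.1)
      have hθanti : AntitoneOn θ (Set.Icc s₁ s₂) := by
        apply myAnti (F' := Θ')
        · intro u hu
          exact hθ' u ⟨le_trans (le_trans hσIcc.1 hs₁mem.1.1) hu.1, le_trans hu.2 hs₂.2⟩
        · intro u hu
          have huIoc : u ∈ Set.Ioc (0:ℝ) t :=
            ⟨lt_of_lt_of_le hσpos (le_trans hs₁mem.1.1 hu.1.le), le_trans hu.2.le hs₂.2⟩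
          have hcnn : 0 ≤ Real.cos (θ u) := (he_pos.trans (hmid u ⟨hu.1, hu.2.le⟩)).le
          have h1 := hkey u huIoc hcnn
          have h0 := hA1_nonpos u ⟨huIoc.1.le, huIoc.2⟩
          have h4 : (((n:ℝ) - 1) / r u - r u * m / 2) * Real.cos (θ u) ≤ 0 :=
            mul_nonpos_iff.mpr (Or.inr ⟨h0, hcnn⟩)
          linarith only [h1, h4]
      have hθ21 : θ s₂ ≤ θ s₁ :=
        hθanti (Set.left_mem_Icc.mpr hs₁le) (Set.right_mem_Icc.mpr hs₁le) hs₁le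
      have hs₁pos : 0 < s₁ := lt_of_lt_of_le hσpos hs₁mem.1.1
      have h1 : θ s₁ < 0 := hθneg s₁ ⟨hs₁pos, le_trans hs₁le hs₂.2⟩
      have h2 : -Real.pi < θ s₂ := hθgt s₂ ⟨lt_trans hs₁pos hs₁lt, hs₂.2⟩
      have h3 := Real.cos_le_cos_of_nonneg_of_le_pi (x := -θ s₁) (y := -θ s₂)
        (by linarith) (by linarith) (by linarith)
      rw [Real.cos_neg, Real.cos_neg] at h3
      linarith only [h3, hs₁cos, hgt]
    -- final decay on [σ, t]
    have hψ : AntitoneOn (fun s => x s + 2 * e * r s) (Set.Icc σ t) := by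
      apply myAnti (F' := fun s => Real.cos (θ s) + 2 * e * Real.sin (θ s))
      · intro u hu
        have hu' : u ∈ Set.Icc (0:ℝ) t := ⟨le_trans hσIcc.1 hu.1, hu.2⟩
        exact (hx' u hu').add (HasDerivAt.const_mul (2 * e) (hr' u hu'))
      · intro u hu
        have hu' : u ∈ Set.Icc (0:ℝ) t := ⟨le_trans hσIcc.1 hu.1.le, hu.2.le⟩
        have hsin := hsin_nonpos u hu'
        have hcosu := hcosle u ⟨hu.1.le, hu.2.le⟩
        rcases le_or_gt (Real.cos (θ u)) 0 with h | h
        · have h10 : 2 * e * Real.sin (θ u) ≤ 0 :=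
            mul_nonpos_iff.mpr (Or.inl ⟨by linarith only [he_pos], hsin⟩)
          linarith only [h, h10]
        · have hsq : Real.sin (θ u) ^ 2 + Real.cos (θ u) ^ 2 = 1 := Real.sin_sq_add_cos_sq _
          have hc12 : Real.cos (θ u) ≤ 1 / 2 := le_trans hcosu he_half
          have hc2 : Real.cos (θ u) ^ 2 ≤ 1 / 4 := by
            have h13 := mul_le_mul hc12 hc12 h.le (by norm_num : (0:ℝ) ≤ 1 / 2)
            linarith only [h13]
          have hsq3 : 3 / 4 ≤ Real.sin (θ u) ^ 2 := by linarith only [hsq, hc2]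
          have h9 : Real.sin (θ u) ≤ -(1 / 2) := by
            by_contra hcon
            push_neg at hcon
            have hns : 0 ≤ -Real.sin (θ u) := neg_nonneg.mpr hsin
            have h11 : -Real.sin (θ u) * -Real.sin (θ u) ≤ 1 / 2 * (1 / 2) :=
              mul_le_mul (by linarith only [hcon]) (by linarith only [hcon]) hns (by norm_num)
            linarith only [h11, hsq3]
          have h10 := mul_le_mul_of_nonneg_left h9 (by linarith only [he_pos] : (0:ℝ) ≤ 2 * e)
          linarith only [hcosu, h10]
    have hfin : x t + 2 * e * r t ≤ x σ + 2 * e * r σ :=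
      hψ (Set.left_mem_Icc.mpr hσIcc.2) (Set.right_mem_Icc.mpr hσIcc.2) hσIcc.2
    have hrσ : r σ ≤ R := hrub σ hσIcc
    have h2eR : 2 * e * R = 64 * Real.pi / (m * R) := by
      rw [he_def]
      field_simp
      ring
    have hfinal : x t ≤ 8 * Real.pi / (m * R) + 64 * Real.pi / (m * R) := by
      have h11 := mul_le_mul_of_nonneg_left hrσ (by linarith only [he_pos] : (0:ℝ) ≤ 2 * e)
      have h12 : 0 ≤ 2 * e * r t := mul_nonneg (by linarith only [he_pos]) hrt_pos.le
      linarith only [hfin, hxσ, h11, h12, h2eR]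
    have hdd : 72 * Real.pi / m / R = 72 * Real.pi / (m * R) := by
      rw [div_div]
    rw [hdd]
    have heq : 8 * Real.pi / (m * R) + 64 * Real.pi / (m * R) = 72 * Real.pi / (m * R) := by
      ring
    linarith only [hfinal, heq]
  · -- cos θ stays above e on all of [0, t]
    have hna : ∀ s ∈ Set.Ico (0:ℝ) t, e < Real.cos (θ s) := by
      intro s hs
      by_contra h
      push_neg at h
      exact hS ⟨s, ⟨hs.1, hs.2.le⟩, h⟩
    have hxt := hphase1 t ⟨ht0, le_rfl⟩ hna
    have hdd : 72 * Real.pi / m / R = 72 * Real.pi / (m * R) := by rw [div_div]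
    rw [hdd]
    have h1 : 8 * Real.pi / (m * R) ≤ 72 * Real.pi / (m * R) :=
      (div_le_div_iff_of_pos_right (by positivity)).mpr (by linarith only [hπ])
    linarith only [hxt, h1]
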